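/- Fix integers n ≥ k ≥ 2 and reals 0 < p ≤ q ≤ 1 with p q·C(n,k) > 4·n·log n. Let G ~ H^{(k)}(n,p) and H ~ H^{(k)}(n,q) be independent. Then for all sufficiently large n, with probability at least 1 − e^{−n/2}, one has discP(G,H) ≤ 2·√(p q·C(n,k)·n·log n). -/

import Mathlib

open MeasureTheory Finset Filter

/-- Bernoulli measure on `Bool` with success probability `p`. -/
noncomputable def bern (p : ℝ) : Measure Bool :=
  ENNReal.ofReal p • Measure.dirac true + ENNReal.ofReal (1 - p) • Measure.dirac false

/-- Product Bernoulli measure on subsets of `Finset (Fin n)` (indicator functions),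
modelling the random hypergraph `H^{(k)}(n, p)`. -/
noncomputable def hypMeasure (n : ℕ) (p : ℝ) : Measure (Finset (Fin n) → Bool) :=
  Measure.pi fun _ => bern p

/-- The edge set of the `k`-uniform hypergraph determined by the outcome `ω`. -/
def edgesOf (n k : ℕ) (ω : Finset (Fin n) → Bool) : Finset (Finset (Fin n)) :=
  Finset.univ.filter fun s => s.card = k ∧ ω s = true

/-- `e(G_π ∩ H)`, the number of common edges of `G` permuted by `π` and `H`. -/
def overlap (n : ℕ) (G H : Finset (Finset (Fin n))) (π : Equiv.Perm (Fin n)) : ℕ :=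
  ((G.image fun e => e.image π) ∩ H).card

/-- The relative discrepancy `disc(G, H)`. -/
noncomputable def disc (n k : ℕ) (G H : Finset (Finset (Fin n))) : ℝ :=
  Finset.univ.sup' Finset.univ_nonempty fun π : Equiv.Perm (Fin n) =>
    |(overlap n G H π : ℝ) -
      ((G.card : ℝ) / (n.choose k)) * ((H.card : ℝ) / (n.choose k)) * (n.choose k)|

/-- The probabilistic discrepancy `discP(G, H)`. -/
noncomputable def discP (n k : ℕ) (p q : ℝ) (G H : Finset (Finset (Fin n))) : ℝ :=
  Finset.univ.sup' Finset.univ_nonempty fun π : Equiv.Perm (Fin n) =>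
    |(overlap n G H π : ℝ) - p * q * (n.choose k)|

/-- `N = C(n - ⌊n/k⌋, k - 1)`. -/
def Nk (k n : ℕ) : ℕ := (n - n / k).choose (k - 1)


set_option maxHeartbeats 2000000

instance bern_smul_finite (p : ℝ) (b : Bool) :
    IsFiniteMeasure (ENNReal.ofReal p • Measure.dirac b) := by
  constructor
  simp [Measure.smul_apply, ENNReal.ofReal_lt_top]

instance bern_finite (p : ℝ) : IsFiniteMeasure (bern p) := by
  unfold bern; infer_instance

lemma bern_prob {p : ℝ} (h0 : 0 ≤ p) (h1 : p ≤ 1) : IsProbabilityMeasure (bern p) := by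
  constructor
  simp [bern, Measure.add_apply, Measure.smul_apply, Measure.dirac_apply]
  rw [← ENNReal.ofReal_add h0 (by linarith), add_sub_cancel, ENNReal.ofReal_one]

lemma integral_bern {p : ℝ} (h0 : 0 ≤ p) (h1 : p ≤ 1) (g : Bool → ℝ) :
    ∫ b, g b ∂(bern p) = p * g true + (1 - p) * g false := by
  rw [bern, integral_add_measure (Integrable.of_finite) (Integrable.of_finite),
    integral_smul_measure, integral_smul_measure, integral_dirac, integral_dirac,
    ENNReal.toReal_ofReal h0, ENNReal.toReal_ofReal (by linarith)]
  simp [smul_eq_mul]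

lemma integral_pi_bern_prod {ι : Type*} [Fintype ι] (r : ℝ) (g : ι → Bool → ℝ) :
    ∫ f : ι → Bool, ∏ i, g i (f i) ∂(Measure.pi fun _ : ι => bern r)
      = ∏ i, ∫ b, g i b ∂(bern r) := by
  letI : MeasureSpace Bool := ⟨bern r⟩
  haveI : SigmaFinite (volume : Measure Bool) := (by infer_instance : SigmaFinite (bern r))
  exact MeasureTheory.integral_fintype_prod_eq_prod g

lemma integral_pi_bern {ι : Type*} [Fintype ι] [DecidableEq ι] {r : ℝ}
    (h0 : 0 ≤ r) (h1 : r ≤ 1) (K : Finset ι) (u : ι → Bool → ℝ) :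
    ∫ f : ι → Bool, ∏ e ∈ K, u e (f e) ∂(Measure.pi fun _ : ι => bern r)
      = ∏ e ∈ K, (r * u e true + (1 - r) * u e false) := by
  have h1' : ∀ f : ι → Bool, ∏ e ∈ K, u e (f e)
      = ∏ i, (fun i b => if i ∈ K then u i b else 1) i (f i) := by
    intro f
    have h := Finset.prod_ite_mem Finset.univ K (fun i => u i (f i))
    rw [Finset.univ_inter] at h
    simp only at h ⊢
    exact h.symm
  simp_rw [h1']
  rw [integral_pi_bern_prod r (fun i b => if i ∈ K then u i b else 1)]
  have h2 : ∀ i, (∫ b, (if i ∈ K then u i b else 1) ∂(bern r))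
      = if i ∈ K then (r * u i true + (1 - r) * u i false) else 1 := by
    intro i
    by_cases h : i ∈ K <;> simp [h, integral_bern h0 h1] <;> ring
  simp_rw [h2]
  rw [Finset.prod_ite_mem Finset.univ K, Finset.univ_inter]

variable {n k : ℕ} (π : Equiv.Perm (Fin n))

def Kset (n k : ℕ) : Finset (Finset (Fin n)) := Finset.univ.filter fun s => s.card = k

lemma Kset_card : (Kset n k).card = n.choose k := by
  rw [Kset, ← Finset.powerset_univ, ← Finset.powersetCard_eq_filter,
    Finset.card_powersetCard, Finset.card_univ, Fintype.card_fin]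

lemma img_mem_Kset {e : Finset (Fin n)} (he : e ∈ Kset n k) : e.image π ∈ Kset n k := by
  simp only [Kset, Finset.mem_filter, Finset.mem_univ, true_and] at he ⊢
  rw [Finset.card_image_of_injective _ π.injective, he]

lemma overlap_eq_sum (f g : Finset (Fin n) → Bool) :
    overlap n (edgesOf n k f) (edgesOf n k g) π
      = ∑ e ∈ Kset n k, (if f e = true ∧ g (e.image π) = true then 1 else 0) := by
  rw [overlap]
  have h1 : ((edgesOf n k f).image fun e => e.image π) ∩ edgesOf n k g
      = ((edgesOf n k f).filter fun e => e.image π ∈ edgesOf n k g).image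
          fun e => e.image π := by
    ext a
    simp only [Finset.mem_inter, Finset.mem_image, Finset.mem_filter]
    constructor
    · rintro ⟨⟨e, he, rfl⟩, ha⟩; exact ⟨e, ⟨he, ha⟩, rfl⟩
    · rintro ⟨e, ⟨he, ha⟩, rfl⟩; exact ⟨⟨e, he, rfl⟩, ha⟩
  rw [h1, Finset.card_image_of_injective _
    (Finset.image_injective π.injective), Finset.card_filter]
  rw [edgesOf, Finset.sum_filter, Kset, Finset.sum_filter]
  apply Finset.sum_congr rfl
  intro e _
  by_cases hc : e.card = k
  · by_cases hf : f e = true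
    · simp only [hc, hf, true_and, and_true, if_true]
      by_cases hg : g (e.image π) = true
      · simp [edgesOf, hg, Finset.card_image_of_injective _ π.injective, hc]
      · simp [edgesOf, hg]
    · simp [hc, hf]
  · simp [hc]

lemma prod_Kset_reindex (e : Equiv.Perm (Fin n)) (F : Finset (Fin n) → ℝ) :
    ∏ s ∈ Kset n k, F (s.image e) = ∏ s ∈ Kset n k, F s := by
  apply Finset.prod_nbij' (fun s => s.image e) (fun s => s.image e.symm)
  · intro s hs
    simp only [Kset, Finset.mem_filter, Finset.mem_univ, true_and] at hs ⊢
    rw [Finset.card_image_of_injective _ e.injective, hs]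
  · intro s hs
    simp only [Kset, Finset.mem_filter, Finset.mem_univ, true_and] at hs ⊢
    rw [Finset.card_image_of_injective _ e.symm.injective, hs]
  · intro s _
    simp [Finset.image_image]
  · intro s _
    simp [Finset.image_image]
  · intro s _
    rfl

lemma integral_exp_overlap {p q : ℝ} (hp0 : 0 ≤ p) (hp1 : p ≤ 1)
    (hq0 : 0 ≤ q) (hq1 : q ≤ 1) (l : ℝ) :
    ∫ ω : (Finset (Fin n) → Bool) × (Finset (Fin n) → Bool),
        Real.exp (l * (overlap n (edgesOf n k ω.1) (edgesOf n k ω.2) π : ℝ))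
      ∂((hypMeasure n p).prod (hypMeasure n q))
      = (1 + p * q * (Real.exp l - 1)) ^ (n.choose k) := by
  set W : Bool → Bool → ℝ := fun a b => if a = true ∧ b = true then Real.exp l else 1 with hW
  have hrw : ∀ ω : (Finset (Fin n) → Bool) × (Finset (Fin n) → Bool),
      Real.exp (l * (overlap n (edgesOf n k ω.1) (edgesOf n k ω.2) π : ℝ))
        = ∏ e ∈ Kset n k, W (ω.1 e) (ω.2 (e.image π)) := by
    intro ω
    rw [overlap_eq_sum π]
    push_cast
    rw [Finset.mul_sum, Real.exp_sum]
    apply Finset.prod_congr rfl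
    intro e _
    by_cases h : ω.1 e = true ∧ ω.2 (e.image π) = true <;> simp [hW, h]
  simp_rw [hrw]
  haveI : IsProbabilityMeasure (bern q) := bern_prob hq0 hq1
  haveI : IsProbabilityMeasure (bern p) := bern_prob hp0 hp1
  haveI : IsProbabilityMeasure (hypMeasure n q) := by unfold hypMeasure; infer_instance
  haveI : IsProbabilityMeasure (hypMeasure n p) := by unfold hypMeasure; infer_instance
  rw [MeasureTheory.integral_prod _ (Integrable.of_finite)]
  have hinner : ∀ f : Finset (Fin n) → Bool,
      (∫ g : Finset (Fin n) → Bool, ∏ e ∈ Kset n k, W (f e) (g (e.image π))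
        ∂(hypMeasure n q))
        = ∏ e ∈ Kset n k, (q * W (f e) true + (1 - q) * W (f e) false) := by
    intro f
    have h1 : ∀ g : Finset (Fin n) → Bool,
        ∏ e ∈ Kset n k, W (f e) (g (e.image π))
          = ∏ e ∈ Kset n k, W (f (e.image π.symm)) (g e) := by
      intro g
      rw [← prod_Kset_reindex π (fun s => W (f (s.image π.symm)) (g s))]
      apply Finset.prod_congr rfl
      intro e _
      simp [Finset.image_image]
    simp_rw [h1]
    rw [hypMeasure, integral_pi_bern hq0 hq1 (Kset n k)
      (fun e b => W (f (e.image π.symm)) b)]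
    exact prod_Kset_reindex π.symm (fun s => q * W (f s) true + (1 - q) * W (f s) false)
  simp_rw [hinner]
  rw [hypMeasure, integral_pi_bern hp0 hp1 (Kset n k)
    (fun e b => q * W b true + (1 - q) * W b false)]
  rw [Finset.prod_const, Kset_card]
  congr 1
  simp only [hW, if_true, if_false, and_true, and_false, true_and]
  simp
  ring

lemma exp_quad {x : ℝ} (h : |x| ≤ 5/7) : Real.exp x ≤ 1 + x + (7/10) * x^2 := by
  have h1 : |x| ≤ 1 := le_trans h (by norm_num)
  have hb := Real.exp_bound h1 (n := 3) (by norm_num)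
  have hs : ∑ m ∈ Finset.range 3, x ^ m / m.factorial = 1 + x + x^2/2 := by
    norm_num [Finset.sum_range_succ, Nat.factorial]
  rw [hs] at hb
  have h3 : |x|^3 ≤ (5/7) * x^2 := by
    have : |x|^3 = |x| * x^2 := by
      rw [pow_succ, sq_abs, pow_two]; ring
    rw [this]
    apply mul_le_mul_of_nonneg_right h (sq_nonneg x)
  have habs := abs_le.mp hb
  have : (3:ℕ).succ / ((3:ℕ).factorial * 3 : ℝ) = 2/9 := by
    norm_num [Nat.factorial]
  nlinarith [sq_nonneg x, habs.2]

lemma tail_bound {n k : ℕ} (π : Equiv.Perm (Fin n)) {p q : ℝ}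
    (hp0 : 0 < p) (hpq : p ≤ q) (hq1 : q ≤ 1) (hn : 2 ≤ n)
    (h4 : 4 * (n : ℝ) * Real.log n < p * q * (n.choose k)) :
    ((hypMeasure n p).prod (hypMeasure n q))
      {ω : (Finset (Fin n) → Bool) × (Finset (Fin n) → Bool) |
        2 * Real.sqrt (p * q * (n.choose k) * n * Real.log n) <
          |(overlap n (edgesOf n k ω.1) (edgesOf n k ω.2) π : ℝ) - p * q * (n.choose k)|}
      ≤ ENNReal.ofReal (2 * Real.exp (-(10/7) * ((n : ℝ) * Real.log n))) := by
  have hp1 : p ≤ 1 := hpq.trans hq1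
  have hq0 : (0:ℝ) ≤ q := le_trans hp0.le hpq
  haveI : IsProbabilityMeasure (bern q) := bern_prob hq0 hq1
  haveI : IsProbabilityMeasure (bern p) := bern_prob hp0.le hp1
  haveI : IsProbabilityMeasure (hypMeasure n q) := by unfold hypMeasure; infer_instance
  haveI : IsProbabilityMeasure (hypMeasure n p) := by unfold hypMeasure; infer_instance
  set ν := (hypMeasure n p).prod (hypMeasure n q) with hν
  haveI : IsProbabilityMeasure ν := by rw [hν]; infer_instance
  set M : ℝ := (n.choose k : ℝ) with hM
  set L : ℝ := (n : ℝ) * Real.log n with hLdef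
  set m : ℝ := p * q * M with hmdef
  set S : (Finset (Fin n) → Bool) × (Finset (Fin n) → Bool) → ℝ :=
    fun ω => (overlap n (edgesOf n k ω.1) (edgesOf n k ω.2) π : ℝ) with hS
  have hL : 0 < L := by
    apply mul_pos (by positivity)
    apply Real.log_pos
    exact_mod_cast Nat.lt_of_lt_of_le one_lt_two hn
  have h4' : 4 * L < m := by
    rw [hLdef, hmdef, hM]; nlinarith [h4]
  have hm : 0 < m := lt_trans (by positivity) h4'
  set t : ℝ := 2 * Real.sqrt (m * L) with htdef
  have hsq : p * q * M * (n:ℝ) * Real.log n = m * L := by rw [hmdef, hLdef]; ring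
  have ht0 : 0 ≤ t := by positivity
  have ht2 : t ^ 2 = 4 * (m * L) := by
    rw [htdef, mul_pow, Real.sq_sqrt (by positivity)]; ring
  have htm : t < m := by nlinarith [ht2, hm, hL, h4', ht0]
  set lam : ℝ := 5 * t / (7 * m) with hlam
  have hlam0 : 0 ≤ lam := by positivity
  have hlam57 : lam ≤ 5 / 7 := by
    rw [hlam, div_le_div_iff₀ (by positivity) (by norm_num)]
    nlinarith [htm]
  have he1 : lam * t = 20 * L / 7 := by
    have h1 : lam * t = 5 * t ^ 2 / (7 * m) := by rw [hlam]; ring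
    rw [h1, ht2, div_eq_div_iff (by positivity : (7 * m:ℝ) ≠ 0) (by norm_num : (7:ℝ) ≠ 0)]
    ring
  have he2 : m * lam ^ 2 = 100 * L / 49 := by
    have h1 : m * lam ^ 2 = 25 * t ^ 2 * m / (49 * m ^ 2) := by rw [hlam]; ring
    rw [h1, ht2, div_eq_div_iff (by positivity : (49 * m ^ 2:ℝ) ≠ 0) (by norm_num : (49:ℝ) ≠ 0)]
    ring
  have hpq1 : p * q ≤ 1 := by nlinarith
  -- upper tail
  have hup : ν {ω | m + t ≤ S ω} ≤ ENNReal.ofReal (Real.exp (-(10/7) * L)) := by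
    rw [ENNReal.le_ofReal_iff_toReal_le (measure_ne_top ν _) (Real.exp_pos _).le]
    have hch := ProbabilityTheory.measure_ge_le_exp_mul_mgf (μ := ν) (X := S)
      (t := lam) (m + t) hlam0 Integrable.of_finite
    refine le_trans hch ?_
    have hmgf : ProbabilityTheory.mgf S ν lam
        = (1 + p * q * (Real.exp lam - 1)) ^ (n.choose k) := by
      rw [ProbabilityTheory.mgf]
      exact integral_exp_overlap π hp0.le hp1 hq0 hq1 lam
    rw [hmgf]
    set c : ℝ := Real.exp lam - 1 with hc
    have hc0 : 0 ≤ c := by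
      rw [hc]; simp only [sub_nonneg]; exact Real.one_le_exp hlam0
    have hstep : (1 + p * q * c) ^ (n.choose k) ≤ Real.exp (m * c) := by
      calc (1 + p * q * c) ^ (n.choose k) ≤ Real.exp (p * q * c) ^ (n.choose k) := by
            apply pow_le_pow_left₀ (by positivity)
            linarith [Real.add_one_le_exp (p * q * c)]
        _ = Real.exp ((n.choose k : ℝ) * (p * q * c)) := by rw [← Real.exp_nat_mul]
        _ = Real.exp (m * c) := by rw [hmdef, hM]; ring_nf
    calc Real.exp (-lam * (m + t)) * (1 + p * q * c) ^ (n.choose k)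
        ≤ Real.exp (-lam * (m + t)) * Real.exp (m * c) :=
          mul_le_mul_of_nonneg_left hstep (Real.exp_pos _).le
      _ = Real.exp (-lam * (m + t) + m * c) := by rw [← Real.exp_add]
      _ ≤ Real.exp (-(10/7) * L) := by
          apply Real.exp_le_exp.2
          have hcq : c ≤ lam + (7/10) * lam ^ 2 := by
            have := exp_quad (x := lam) (by rw [abs_of_nonneg hlam0]; exact hlam57)
            rw [hc]; linarith
          nlinarith [he1, he2, hm, mul_le_mul_of_nonneg_left hcq hm.le]
  -- lower tail
  have hlo : ν {ω | S ω ≤ m - t} ≤ ENNReal.ofReal (Real.exp (-(10/7) * L)) := by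
    rw [ENNReal.le_ofReal_iff_toReal_le (measure_ne_top ν _) (Real.exp_pos _).le]
    have hch := ProbabilityTheory.measure_le_le_exp_mul_mgf (μ := ν) (X := S)
      (t := -lam) (m - t) (by linarith) Integrable.of_finite
    refine le_trans hch ?_
    have hmgf : ProbabilityTheory.mgf S ν (-lam)
        = (1 + p * q * (Real.exp (-lam) - 1)) ^ (n.choose k) := by
      rw [ProbabilityTheory.mgf]
      exact integral_exp_overlap π hp0.le hp1 hq0 hq1 (-lam)
    rw [hmgf]
    set c : ℝ := Real.exp (-lam) - 1 with hc
    have hcm1 : -1 < c := by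
      rw [hc]; have := Real.exp_pos (-lam); linarith
    have hc0 : c ≤ 0 := by
      rw [hc]
      have : Real.exp (-lam) ≤ Real.exp 0 := Real.exp_le_exp.2 (by linarith)
      simp only [Real.exp_zero] at this
      linarith
    have hge : (0:ℝ) ≤ 1 + p * q * c := by nlinarith
    have hstep : (1 + p * q * c) ^ (n.choose k) ≤ Real.exp (m * c) := by
      calc (1 + p * q * c) ^ (n.choose k) ≤ Real.exp (p * q * c) ^ (n.choose k) := by
            apply pow_le_pow_left₀ hge
            linarith [Real.add_one_le_exp (p * q * c)]
        _ = Real.exp ((n.choose k : ℝ) * (p * q * c)) := by rw [← Real.exp_nat_mul]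
        _ = Real.exp (m * c) := by rw [hmdef, hM]; ring_nf
    calc Real.exp (-(-lam) * (m - t)) * (1 + p * q * c) ^ (n.choose k)
        ≤ Real.exp (-(-lam) * (m - t)) * Real.exp (m * c) :=
          mul_le_mul_of_nonneg_left hstep (Real.exp_pos _).le
      _ = Real.exp (-(-lam) * (m - t) + m * c) := by rw [← Real.exp_add]
      _ ≤ Real.exp (-(10/7) * L) := by
          apply Real.exp_le_exp.2
          have hcq : c ≤ -lam + (7/10) * lam ^ 2 := by
            have h57 : |(-lam)| ≤ 5/7 := by rw [abs_neg, abs_of_nonneg hlam0]; exact hlam57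
            have := exp_quad (x := -lam) h57
            rw [hc]; nlinarith [this]
          nlinarith [he1, he2, hm, mul_le_mul_of_nonneg_left hcq hm.le]
  -- combine
  have hts : 2 * Real.sqrt (p * q * (n.choose k : ℝ) * (n : ℝ) * Real.log (n : ℝ)) = t := by
    rw [htdef, hsq]
  have hsub : {ω : (Finset (Fin n) → Bool) × (Finset (Fin n) → Bool) |
        2 * Real.sqrt (p * q * (n.choose k) * n * Real.log n) <
          |(overlap n (edgesOf n k ω.1) (edgesOf n k ω.2) π : ℝ) - p * q * (n.choose k)|}
      ⊆ {ω | m + t ≤ S ω} ∪ {ω | S ω ≤ m - t} := by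
    intro ω hω
    simp only [Set.mem_setOf_eq] at hω
    rw [hts] at hω
    rcases lt_abs.1 hω with h | h
    · left; simp only [Set.mem_setOf_eq, hS]; linarith
    · right; simp only [Set.mem_setOf_eq, hS]; linarith
  refine le_trans (measure_mono hsub) ?_
  refine le_trans (measure_union_le _ _) ?_
  rw [show (2:ℝ) * Real.exp (-(10/7) * L) = Real.exp (-(10/7) * L) + Real.exp (-(10/7) * L)
    by ring, ENNReal.ofReal_add (Real.exp_pos _).le (Real.exp_pos _).le]
  exact add_le_add hup hlo

/-- upper bound for the probabilistic discrepancy when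
`p*q*C(n,k) > 4*n*log n`. -/
theorem stmt11 :
    ∃ n₀ : ℕ, ∀ n : ℕ, n₀ ≤ n → ∀ k : ℕ, 2 ≤ k → k ≤ n → ∀ p q : ℝ,
      0 < p → p ≤ q → q ≤ 1 →
      4 * (n : ℝ) * Real.log n < p * q * (n.choose k) →
      ENNReal.ofReal (1 - Real.exp (-(n : ℝ) / 2)) ≤
        ((hypMeasure n p).prod (hypMeasure n q))
          {ω | discP n k p q (edgesOf n k ω.1) (edgesOf n k ω.2) ≤
                 2 * Real.sqrt (p * q * (n.choose k) * n * Real.log n)} := by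
  refine ⟨100, fun n hn k hk2 hkn p q hp hpq hq1 h4 => ?_⟩
  have hn2 : 2 ≤ n := le_trans (by norm_num) hn
  have hn100 : (100:ℝ) ≤ (n:ℝ) := by exact_mod_cast hn
  have hnpos : (0:ℝ) < (n:ℝ) := by linarith
  haveI : IsProbabilityMeasure (bern q) := bern_prob (le_trans hp.le hpq) hq1
  haveI : IsProbabilityMeasure (bern p) := bern_prob hp.le (hpq.trans hq1)
  haveI : IsProbabilityMeasure (hypMeasure n q) := by unfold hypMeasure; infer_instance
  haveI : IsProbabilityMeasure (hypMeasure n p) := by unfold hypMeasure; infer_instance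
  set ν := (hypMeasure n p).prod (hypMeasure n q) with hν
  haveI : IsProbabilityMeasure ν := by rw [hν]; infer_instance
  set L : ℝ := (n : ℝ) * Real.log n with hL
  set Bad : Equiv.Perm (Fin n) → Set ((Finset (Fin n) → Bool) × (Finset (Fin n) → Bool)) :=
    fun π => {ω | 2 * Real.sqrt (p * q * (n.choose k) * n * Real.log n) <
          |(overlap n (edgesOf n k ω.1) (edgesOf n k ω.2) π : ℝ) - p * q * (n.choose k)|}
    with hBad
  set A : Set ((Finset (Fin n) → Bool) × (Finset (Fin n) → Bool)) :=
    {ω | discP n k p q (edgesOf n k ω.1) (edgesOf n k ω.2) ≤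
           2 * Real.sqrt (p * q * (n.choose k) * n * Real.log n)} with hA
  have hsub : Aᶜ ⊆ ⋃ π : Equiv.Perm (Fin n), Bad π := by
    intro ω hω
    simp only [hA, Set.mem_compl_iff, Set.mem_setOf_eq, not_le] at hω
    rw [discP] at hω
    rcases (Finset.lt_sup'_iff _).1 hω with ⟨π, _, hπ⟩
    exact Set.mem_iUnion.2 ⟨π, hπ⟩
  have hAc : ν Aᶜ ≤ ENNReal.ofReal (Real.exp (-(n:ℝ)/2)) := by
    refine le_trans (measure_mono hsub) ?_
    refine le_trans (measure_iUnion_le _) ?_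
    rw [tsum_fintype]
    have hsum : ∑ π : Equiv.Perm (Fin n), ν (Bad π)
        ≤ ∑ _π : Equiv.Perm (Fin n), ENNReal.ofReal (2 * Real.exp (-(10/7) * L)) :=
      Finset.sum_le_sum fun π _ => tail_bound π hp hpq hq1 hn2 h4
    refine le_trans hsum ?_
    rw [Finset.sum_const, Finset.card_univ, Fintype.card_perm, Fintype.card_fin,
      nsmul_eq_mul, ← ENNReal.ofReal_natCast,
      ← ENNReal.ofReal_mul (by positivity)]
    apply ENNReal.ofReal_le_ofReal
    -- real arithmetic
    have hlog4 : (4:ℝ) ≤ Real.log n := by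
      have he : Real.exp 1 < 2.7182818286 := Real.exp_one_lt_d9
      have h4e : Real.exp 4 = (Real.exp 1) ^ 4 := by
        rw [← Real.exp_nat_mul]; norm_num
      have h100 : Real.exp 4 ≤ 100 := by
        rw [h4e]
        have h1 : Real.exp 1 ≤ 2.72 := by linarith
        have h2 := pow_le_pow_left₀ (Real.exp_pos 1).le h1 4
        norm_num at h2 ⊢
        linarith
      calc (4:ℝ) ≤ Real.log 100 := (Real.le_log_iff_exp_le (by norm_num)).2 h100
        _ ≤ Real.log n := Real.log_le_log (by norm_num) hn100
    have hL4 : 4 * (n:ℝ) ≤ L := by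
      rw [hL]; nlinarith
    have hfact : ((n.factorial : ℝ)) ≤ Real.exp L := by
      have h1 : ((n.factorial : ℝ)) ≤ (n:ℝ) ^ n := by
        exact_mod_cast Nat.factorial_le_pow n
      have h2 : Real.exp L = (n:ℝ) ^ n := by
        rw [hL, Real.exp_nat_mul, Real.exp_log hnpos]
      linarith
    have h2exp : (2:ℝ) ≤ Real.exp ((3/7) * L - (n:ℝ)/2) := by
      have hx : (1:ℝ) ≤ (3/7) * L - (n:ℝ)/2 := by nlinarith
      linarith [Real.add_one_le_exp ((3/7) * L - (n:ℝ)/2)]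
    calc (n.factorial : ℝ) * (2 * Real.exp (-(10/7) * L))
        ≤ Real.exp L * (2 * Real.exp (-(10/7) * L)) := by
          apply mul_le_mul_of_nonneg_right hfact (by positivity)
      _ = 2 * Real.exp (-(3/7) * L) := by
          rw [mul_comm (Real.exp L), mul_assoc, ← Real.exp_add]; ring_nf
      _ ≤ Real.exp ((3/7) * L - (n:ℝ)/2) * Real.exp (-(3/7) * L) := by
          apply mul_le_mul_of_nonneg_right h2exp (Real.exp_pos _).le
      _ = Real.exp (-(n:ℝ)/2) := by rw [← Real.exp_add]; ring_nf
  have hmeasA : MeasurableSet Aᶜ := .of_discrete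
  have hcompl : ν A = 1 - ν Aᶜ := by
    have h := prob_compl_eq_one_sub (μ := ν) hmeasA
    rwa [compl_compl] at h
  calc ENNReal.ofReal (1 - Real.exp (-(n:ℝ)/2))
      = 1 - ENNReal.ofReal (Real.exp (-(n:ℝ)/2)) := by
        rw [ENNReal.ofReal_sub _ (Real.exp_pos _).le, ENNReal.ofReal_one]
    _ ≤ 1 - ν Aᶜ := tsub_le_tsub_left hAc 1
    _ = ν A := hcompl.symm
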